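/- Let 𝓗 be a finite hypergraph on a finite set V with dim(𝓗) ≤ 3, i.e., |H| ≤ 3 for every H ∈ 𝓗. Then 𝓗 is a Tetris hypergraph if and only if 𝓗 satisfies condition (*): for every S ⊆ V with 𝓗_S ≠ ∅ there exists H ∈ 𝓗_S such that H ∩ H' ≠ ∅ for all H' ∈ 𝓗_S. -/

import Mathlib

/-- The minimum excludant of a set of natural numbers. -/
noncomputable def mex (S : Set ℕ) : ℕ := sInf {n : ℕ | n ∉ S}

open Classical in
/-- The Sprague–Grundy function of the impartial game with move relation `move`
(meaningful when every play is finite, i.e. the reversed move relation is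
well-founded): it satisfies `sgFun move x = mex {sgFun move y | move x y}`. -/
noncomputable def sgFun {X : Type*} (move : X → X → Prop) : X → ℕ :=
  if hwf : WellFounded (fun y x => move x y) then
    hwf.fix (fun x ih => mex {v : ℕ | ∃ (y : X) (h : move x y), ih y h = v})
  else fun _ => 0

open Classical in
/-- The Tetris function: the length of a longest play starting at `x`
(meaningful when every play is finite and the game is finitely branching):
it satisfies `tetrisFun move x = sup {tetrisFun move y + 1 | move x y}`. -/
noncomputable def tetrisFun {X : Type*} (move : X → X → Prop) : X → ℕ :=
  if hwf : WellFounded (fun y x => move x y) then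
    hwf.fix (fun x ih => sSup {v : ℕ | ∃ (y : X) (h : move x y), v = ih y h + 1})
  else fun _ => 0

/-- A game is SG decreasing if every move strictly decreases the SG value. -/
def SGDecreasing {X : Type*} (move : X → X → Prop) : Prop :=
  ∀ x y, move x y → sgFun move y < sgFun move x

/-- The move relation of the game `NIM_𝓗` on positions `ℕ^V`. -/
def nimMove {V : Type*} (𝓗 : Set (Finset V)) (x x' : V → ℕ) : Prop :=
  ∃ H ∈ 𝓗, (∀ i ∈ H, x' i < x i) ∧ ∀ i ∉ H, x' i = x i

/-- A hypergraph is Tetris if `NIM_𝓗` is SG decreasing. -/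
def IsTetrisHypergraph {V : Type*} (𝓗 : Set (Finset V)) : Prop :=
  SGDecreasing (nimMove 𝓗)

/-- The move relation of the `𝓗`-combination of the games `move i`. -/
def combMove {V : Type*} {X : V → Type*} (𝓗 : Set (Finset V))
    (move : ∀ i, X i → X i → Prop) (x x' : ∀ i, X i) : Prop :=
  ∃ H ∈ 𝓗, (∀ i ∈ H, move i (x i) (x' i)) ∧ ∀ i ∉ H, x' i = x i

/-- Condition (*): every nonempty induced subhypergraph has a hyperedge
intersecting all its hyperedges. -/
def CondStar {V : Type*} [DecidableEq V] (𝓗 : Set (Finset V)) : Prop :=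
  ∀ S : Finset V, (∃ H ∈ 𝓗, H ⊆ S) →
    ∃ H ∈ 𝓗, H ⊆ S ∧ ∀ H' ∈ 𝓗, H' ⊆ S → (H ∩ H').Nonempty

set_option linter.unusedSectionVars false

/-! ### mex lemmas -/

lemma mex_Iio (n : ℕ) : mex (Set.Iio n) = n := by
  unfold mex
  have : {m : ℕ | m ∉ Set.Iio n} = Set.Ici n := by
    ext m; simp [Set.mem_Iio, Set.mem_Ici, not_lt]
  rw [this]
  exact csInf_Ici

lemma mex_eq_zero {S : Set ℕ} (h : 0 ∉ S) : mex S = 0 :=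
  Nat.eq_zero_of_le_zero (Nat.sInf_le h)

/-! ### Fixpoint equations -/

section FixEq

variable {X : Type*} {move : X → X → Prop}

lemma sgFun_eq (hwf : WellFounded (fun y x => move x y)) (x : X) :
    sgFun move x = mex {v : ℕ | ∃ y, move x y ∧ sgFun move y = v} := by
  have hsg : sgFun move = hwf.fix
      (fun x ih => mex {v : ℕ | ∃ (y : X) (h : move x y), ih y h = v}) := by
    unfold sgFun; rw [dif_pos hwf]
  conv_lhs => rw [hsg, WellFounded.fix_eq]
  congr 1
  ext v
  constructor
  · rintro ⟨y, h, rfl⟩; exact ⟨y, h, by rw [hsg]⟩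
  · rintro ⟨y, h, rfl⟩; exact ⟨y, h, by rw [hsg]⟩

lemma tetrisFun_eq (hwf : WellFounded (fun y x => move x y)) (x : X) :
    tetrisFun move x = sSup {v : ℕ | ∃ y, move x y ∧ v = tetrisFun move y + 1} := by
  have ht : tetrisFun move = hwf.fix
      (fun x ih => sSup {v : ℕ | ∃ (y : X) (h : move x y), v = ih y h + 1}) := by
    unfold tetrisFun; rw [dif_pos hwf]
  conv_lhs => rw [ht, WellFounded.fix_eq]
  congr 1
  ext v
  constructor
  · rintro ⟨y, h, rfl⟩; exact ⟨y, h, by rw [ht]⟩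
  · rintro ⟨y, h, rfl⟩; exact ⟨y, h, by rw [ht]⟩

end FixEq

/-! ### NIM basics -/

section Nim

variable {V : Type*} [Fintype V] [DecidableEq V] {𝓗 : Set (Finset V)}

lemma nimMove_wf (hne : ∀ H ∈ 𝓗, H.Nonempty) :
    WellFounded (fun y x => nimMove 𝓗 x y) := by
  have : Subrelation (fun y x => nimMove 𝓗 x y)
      (InvImage (· < ·) (fun x : V → ℕ => ∑ i, x i)) := by
    rintro y x ⟨H, hH, hlt, heq⟩
    obtain ⟨i₀, hi₀⟩ := hne H hH
    refine Finset.sum_lt_sum (fun i _ => ?_) ⟨i₀, Finset.mem_univ _, hlt i₀ hi₀⟩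
    by_cases hi : i ∈ H
    · exact (hlt i hi).le
    · exact (heq i hi).le
  exact Subrelation.wf this (InvImage.wf _ wellFounded_lt)

variable (hne : ∀ H ∈ 𝓗, H.Nonempty)

/-- Successors of a position form a finite set. -/
lemma nimMove_finite (x : V → ℕ) : {y | nimMove 𝓗 x y}.Finite := by
  apply Set.Finite.subset (Set.finite_Icc (fun _ : V => 0) x)
  rintro y ⟨H, _, hlt, heq⟩
  constructor
  · intro i; exact Nat.zero_le _
  · intro i
    by_cases hi : i ∈ H
    · exact (hlt i hi).le
    · exact (heq i hi).le

/-- notation: T for the tetris function of the nim game -/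
noncomputable def nimT (𝓗 : Set (Finset V)) : (V → ℕ) → ℕ := tetrisFun (nimMove 𝓗)

include hne

lemma nimT_eq (x : V → ℕ) :
    nimT 𝓗 x = sSup {v : ℕ | ∃ y, nimMove 𝓗 x y ∧ v = nimT 𝓗 y + 1} :=
  tetrisFun_eq (nimMove_wf hne) x

lemma nimT_bddAbove (x : V → ℕ) :
    BddAbove {v : ℕ | ∃ y, nimMove 𝓗 x y ∧ v = nimT 𝓗 y + 1} := by
  have h1 : {v : ℕ | ∃ y, nimMove 𝓗 x y ∧ v = nimT 𝓗 y + 1} ⊆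
      (fun y => nimT 𝓗 y + 1) '' {y | nimMove 𝓗 x y} := by
    rintro v ⟨y, hy, rfl⟩; exact ⟨y, hy, rfl⟩
  exact (((nimMove_finite x).image _).subset h1).bddAbove

lemma nimT_succ_le {x y : V → ℕ} (h : nimMove 𝓗 x y) :
    nimT 𝓗 y + 1 ≤ nimT 𝓗 x := by
  rw [nimT_eq hne x]
  exact le_csSup (nimT_bddAbove hne x) ⟨y, h, rfl⟩

lemma nimT_lt {x y : V → ℕ} (h : nimMove 𝓗 x y) : nimT 𝓗 y < nimT 𝓗 x :=
  Nat.lt_of_succ_le (nimT_succ_le hne h)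

lemma nimT_eq_zero_iff {x : V → ℕ} : nimT 𝓗 x = 0 ↔ ¬∃ y, nimMove 𝓗 x y := by
  constructor
  · rintro h0 ⟨y, hy⟩
    have := nimT_succ_le hne hy
    omega
  · intro h
    rw [nimT_eq hne x]
    convert (show sSup (∅ : Set ℕ) = 0 by simp)
    · rw [Set.eq_empty_iff_forall_notMem]
      rintro v ⟨y, hy, _⟩
      exact h ⟨y, hy⟩

lemma nimT_spec {x : V → ℕ} (h : nimT 𝓗 x ≠ 0) :
    ∃ y, nimMove 𝓗 x y ∧ nimT 𝓗 x = nimT 𝓗 y + 1 := by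
  have hne' : {v : ℕ | ∃ y, nimMove 𝓗 x y ∧ v = nimT 𝓗 y + 1}.Nonempty := by
    by_contra hc
    rw [Set.not_nonempty_iff_eq_empty] at hc
    rw [nimT_eq hne x, hc, csSup_empty] at h
    exact h rfl
  have := Nat.sSup_mem hne' (nimT_bddAbove hne x)
  rw [← nimT_eq hne x] at this
  obtain ⟨y, hy, hv⟩ := this
  exact ⟨y, hy, hv⟩

end Nim

/-! ### Packings -/

section Pack

variable {V : Type*} [Fintype V] [DecidableEq V] {𝓗 : Set (Finset V)}

/-- usage of coordinate `i` by the multiset of edges `z` -/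
def usage (z : Multiset (Finset V)) (i : V) : ℕ := Multiset.countP (fun e => i ∈ e) z

/-- `z` is a packing for position `x`. -/
def IsPack (𝓗 : Set (Finset V)) (x : V → ℕ) (z : Multiset (Finset V)) : Prop :=
  (∀ e ∈ z, e ∈ 𝓗) ∧ ∀ i, usage z i ≤ x i

lemma usage_cons (e : Finset V) (z : Multiset (Finset V)) (i : V) :
    usage (e ::ₘ z) i = usage z i + (if i ∈ e then 1 else 0) := by
  simp [usage, Multiset.countP_cons]

lemma usage_pos_iff {z : Multiset (Finset V)} {i : V} :
    0 < usage z i ↔ ∃ e ∈ z, i ∈ e := by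
  simp [usage, Multiset.countP_pos]

lemma usage_le_of_le {z z' : Multiset (Finset V)} (h : z' ≤ z) (i : V) :
    usage z' i ≤ usage z i := Multiset.countP_le_of_le _ h

lemma usage_erase_of_mem {z : Multiset (Finset V)} {e : Finset V} (he : e ∈ z) (i : V)
    (hi : i ∈ e) : usage (z.erase e) i + 1 = usage z i := by
  conv_rhs => rw [← Multiset.cons_erase he]
  rw [usage_cons, if_pos hi]

variable (hne : ∀ H ∈ 𝓗, H.Nonempty)
include hne

lemma pack_card_le : ∀ n, ∀ (x : V → ℕ) (z : Multiset (Finset V)), z.card = n →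
    IsPack 𝓗 x z → n ≤ nimT 𝓗 x := by
  intro n
  induction n with
  | zero => intro x z _ _; exact Nat.zero_le _
  | succ m ih =>
    intro x z hcard ⟨hz1, hz2⟩
    have hzne : z ≠ 0 := by
      intro h; rw [h] at hcard; simp at hcard
    obtain ⟨e, he⟩ := Multiset.exists_mem_of_ne_zero hzne
    set y : V → ℕ := fun i => if i ∈ e then x i - 1 else x i with hy
    have hmove : nimMove 𝓗 x y := by
      refine ⟨e, hz1 e he, fun i hi => ?_, fun i hi => by simp [hy, hi]⟩
      have : 0 < usage z i := usage_pos_iff.2 ⟨e, he, hi⟩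
      have := hz2 i
      simp only [hy, if_pos hi]
      omega
    have hpack' : IsPack 𝓗 y (z.erase e) := by
      constructor
      · exact fun e' he' => hz1 e' (Multiset.mem_of_mem_erase he')
      · intro i
        by_cases hi : i ∈ e
        · have := usage_erase_of_mem he i hi
          have := hz2 i
          simp only [hy, if_pos hi]
          omega
        · simp only [hy, if_neg hi]
          exact le_trans (usage_le_of_le (Multiset.erase_le e z) i) (hz2 i)
    have hcard' : (z.erase e).card = m := by
      rw [Multiset.card_erase_of_mem he, hcard]; rfl
    have := ih y (z.erase e) hcard' hpack'
    have := nimT_succ_le hne hmove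
    omega

lemma pack_exists : ∀ n, ∀ x : V → ℕ, nimT 𝓗 x = n →
    ∃ z : Multiset (Finset V), IsPack 𝓗 x z ∧ z.card = n := by
  intro n
  induction n with
  | zero =>
    intro x _
    exact ⟨0, ⟨by simp, fun i => by simp [usage]⟩, rfl⟩
  | succ m ih =>
    intro x hx
    obtain ⟨y, hmove, hval⟩ := nimT_spec hne (by omega : nimT 𝓗 x ≠ 0)
    have hym : nimT 𝓗 y = m := by omega
    obtain ⟨z', ⟨hz1, hz2⟩, hzc⟩ := ih y hym
    obtain ⟨H, hH, hlt, heq⟩ := hmove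
    refine ⟨H ::ₘ z', ⟨?_, ?_⟩, by simp [hzc]⟩
    · intro e' he'
      rcases Multiset.mem_cons.1 he' with rfl | h
      · exact hH
      · exact hz1 e' h
    · intro i
      rw [usage_cons]
      by_cases hi : i ∈ H
      · have := hz2 i; have := hlt i hi; simp only [if_pos hi]; omega
      · have := hz2 i; rw [heq i hi] at this; simp only [if_neg hi]; omega

lemma nimT_mono {x y : V → ℕ} (h : ∀ i, y i ≤ x i) : nimT 𝓗 y ≤ nimT 𝓗 x := by
  obtain ⟨z, ⟨hz1, hz2⟩, hzc⟩ := pack_exists hne (nimT 𝓗 y) y rfl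
  exact pack_card_le hne _ x z hzc ⟨hz1, fun i => le_trans (hz2 i) (h i)⟩

/-- Deletion lemma: reduce a packing to satisfy capacities `c`, deleting at most
`J.card` edges, provided overfull coordinates are within `J` and only by 1. -/
lemma pack_reduce : ∀ (J : Finset V) (z : Multiset (Finset V)),
    (∀ e ∈ z, e ∈ 𝓗) → ∀ (c : V → ℕ),
    (∀ i, usage z i ≤ c i + (if i ∈ J then 1 else 0)) →
    ∃ z' : Multiset (Finset V), z' ≤ z ∧ z.card ≤ z'.card + J.card ∧ IsPack 𝓗 c z' := by
  intro J
  induction J using Finset.induction_on with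
  | empty =>
    intro z hz c hc
    exact ⟨z, le_refl _, by simp, hz, fun i => by simpa using hc i⟩
  | @insert j J hjJ ih =>
    intro z hz c hc
    by_cases hcase : usage z j ≤ c j
    · obtain ⟨z', h1, h2, h3⟩ := ih z hz c (fun i => by
        by_cases hij : i = j
        · subst hij; simpa using hcase.trans (by omega)
        · have := hc i
          by_cases hiJ : i ∈ J
          · simp only [if_pos hiJ]
            simpa [Finset.mem_insert, hiJ] using this
          · simp only [if_neg hiJ]
            simpa [Finset.mem_insert, hij, hiJ] using this)
      refine ⟨z', h1, ?_, h3⟩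
      rw [Finset.card_insert_of_notMem hjJ]; omega
    · push_neg at hcase
      have hpos : 0 < usage z j := by
        have := hc j; omega
      obtain ⟨e, he, hje⟩ := usage_pos_iff.1 hpos
      obtain ⟨z', h1, h2, h3⟩ := ih (z.erase e) (fun e' he' => hz e' (Multiset.mem_of_mem_erase he')) c (fun i => by
        by_cases hij : i = j
        · subst hij
          have := usage_erase_of_mem he i hje
          have := hc i
          simp only [Finset.mem_insert, true_or, if_pos] at this
          by_cases hiJ : i ∈ J
          · simp only [if_pos hiJ]; omega
          · simp only [if_neg hiJ]; omega
        · have h4 := usage_le_of_le (Multiset.erase_le e z) i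
          have := hc i
          by_cases hiJ : i ∈ J
          · simp only [if_pos hiJ]
            simp only [Finset.mem_insert, hiJ, or_true, if_pos] at this
            omega
          · simp only [if_neg hiJ]
            simp only [Finset.mem_insert, hij, hiJ, or_self, if_neg, not_false_iff] at this
            omega)
      refine ⟨z', h1.trans (Multiset.erase_le e z), ?_, h3⟩
      rw [Finset.card_insert_of_notMem hjJ]
      have hzpos : 0 < z.card := Multiset.card_pos.2 (by rintro rfl; simp at he)
      have hce : (z.erase e).card + 1 = z.card := by
        rw [Multiset.card_erase_of_mem he]
        exact Nat.succ_pred_eq_of_pos hzpos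
      omega

end Pack

/-! ### Zero and decrement moves, IVT -/

section Moves

variable {V : Type*} [Fintype V] [DecidableEq V] {𝓗 : Set (Finset V)}

/-- position with coordinates of `G` zeroed -/
def xzero (x : V → ℕ) (G : Finset V) : V → ℕ := fun i => if i ∈ G then 0 else x i

/-- position with coordinates of `G` decremented -/
def xdec (x : V → ℕ) (G : Finset V) : V → ℕ := fun i => if i ∈ G then x i - 1 else x i

lemma move_xzero {x : V → ℕ} {G : Finset V} (hG : G ∈ 𝓗) (hsub : ∀ i ∈ G, 0 < x i) :
    nimMove 𝓗 x (xzero x G) :=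
  ⟨G, hG, fun i hi => by simpa [xzero, hi] using hsub i hi, fun i hi => by simp [xzero, hi]⟩

lemma move_xdec {x : V → ℕ} {G : Finset V} (hG : G ∈ 𝓗) (hsub : ∀ i ∈ G, 0 < x i) :
    nimMove 𝓗 x (xdec x G) :=
  ⟨G, hG, fun i hi => by simp only [xdec, if_pos hi]; have := hsub i hi; omega,
    fun i hi => by simp [xdec, hi]⟩

lemma xzero_le_xdec (x : V → ℕ) (G : Finset V) : ∀ i, xzero x G i ≤ xdec x G i := by
  intro i; by_cases hi : i ∈ G <;> simp [xzero, xdec, hi]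

variable (hne : ∀ H ∈ 𝓗, H.Nonempty)
include hne

lemma nimT_ne_zero_iff {x : V → ℕ} :
    nimT 𝓗 x ≠ 0 ↔ ∃ e ∈ 𝓗, ∀ i ∈ e, 0 < x i := by
  rw [ne_eq, nimT_eq_zero_iff hne, not_not]
  constructor
  · rintro ⟨y, H, hH, hlt, _⟩
    exact ⟨H, hH, fun i hi => lt_of_le_of_lt (Nat.zero_le _) (hlt i hi)⟩
  · rintro ⟨e, he, hsub⟩
    exact ⟨xzero x e, move_xzero he hsub⟩

lemma pack_edge_supp {x : V → ℕ} {z : Multiset (Finset V)} (hp : IsPack 𝓗 x z)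
    {e : Finset V} (he : e ∈ z) : ∀ i ∈ e, 0 < x i := by
  intro i hi
  have : 0 < usage z i := usage_pos_iff.2 ⟨e, he, hi⟩
  exact lt_of_lt_of_le this (hp.2 i)

/-- Lipschitz: decrementing along `G` decreases `T` by at most `G.card`. -/
lemma nimT_xdec_ge {x : V → ℕ} (G : Finset V) :
    nimT 𝓗 x ≤ nimT 𝓗 (xdec x G) + G.card := by
  obtain ⟨z, ⟨hz1, hz2⟩, hzc⟩ := pack_exists hne (nimT 𝓗 x) x rfl
  obtain ⟨z', _, hcard, hpack⟩ := pack_reduce hne G z hz1 (xdec x G) (fun i => by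
    by_cases hi : i ∈ G
    · have := hz2 i; simp only [xdec, if_pos hi, if_pos hi]; omega
    · have := hz2 i; simp only [xdec, if_neg hi, if_neg hi]; omega)
  have := pack_card_le hne z'.card (xdec x G) z' rfl hpack
  omega

/-- any move along `G` is sandwiched between the zero move and the decrement move -/
lemma nimT_move_le_xdec {x y : V → ℕ} {G : Finset V}
    (h1 : ∀ i ∈ G, y i < x i) (h2 : ∀ i ∉ G, y i = x i) :
    nimT 𝓗 y ≤ nimT 𝓗 (xdec x G) := by
  apply nimT_mono hne
  intro i
  by_cases hi : i ∈ G
  · have := h1 i hi; simp only [xdec, if_pos hi]; omega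
  · simp [xdec, hi, h2 i hi]

lemma nimT_xzero_le_move {x y : V → ℕ} {G : Finset V}
    (h2 : ∀ i ∉ G, y i = x i) :
    nimT 𝓗 (xzero x G) ≤ nimT 𝓗 y := by
  apply nimT_mono hne
  intro i
  by_cases hi : i ∈ G
  · simp [xzero, hi]
  · simp [xzero, hi, h2 i hi]

/-- Discrete intermediate value theorem for moves along a fixed edge `G`. -/
lemma nimT_ivt {x : V → ℕ} {G : Finset V} (hG : G ∈ 𝓗) :
    ∀ n, ∀ y y' : V → ℕ, (∑ i, y' i) = n →
    (∀ i ∈ G, y i < x i) → (∀ i ∉ G, y i = x i) →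
    (∀ i ∈ G, y' i < x i) → (∀ i ∉ G, y' i = x i) →
    (∀ i, y i ≤ y' i) → ∀ k, nimT 𝓗 y ≤ k → k ≤ nimT 𝓗 y' →
    ∃ y'', nimMove 𝓗 x y'' ∧ nimT 𝓗 y'' = k := by
  intro n
  induction n using Nat.strong_induction_on with
  | _ n ih =>
    intro y y' hsum hy1 hy2 hy1' hy2' hle k hk1 hk2
    rcases eq_or_lt_of_le hk2 with heq | hlt
    · exact ⟨y', ⟨G, hG, hy1', hy2'⟩, heq.symm⟩
    · -- k < T y', so y ≠ y'; find coordinate to decrement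
      have hyne : y ≠ y' := by
        rintro rfl; omega
      have : ∃ j, y j < y' j := by
        by_contra hc
        push_neg at hc
        exact hyne (funext fun i => le_antisymm (hle i) (hc i))
      obtain ⟨j, hj⟩ := this
      have hjG : j ∈ G := by
        by_contra hjn
        rw [hy2 j hjn, hy2' j hjn] at hj
        omega
      set y'' : V → ℕ := Function.update y' j (y' j - 1) with hy''
      have hsum' : (∑ i, y'' i) < n := by
        rw [← hsum]
        apply Finset.sum_lt_sum
        · intro i _
          by_cases hij : i = j
          · subst hij; simp only [hy'', Function.update_self]; omega
          · simp [hy'', hij]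
        · exact ⟨j, Finset.mem_univ _, by simp only [hy'', Function.update_self]; omega⟩
      have h1'' : ∀ i ∈ G, y'' i < x i := by
        intro i hi
        by_cases hij : i = j
        · subst hij; simp only [hy'', Function.update_self]
          have := hy1' i hi; omega
        · simp only [hy'', Function.update_of_ne hij]; exact hy1' i hi
      have h2'' : ∀ i ∉ G, y'' i = x i := by
        intro i hi
        have hij : i ≠ j := fun h => hi (h ▸ hjG)
        simp only [hy'', Function.update_of_ne hij]; exact hy2' i hi
      have hle'' : ∀ i, y i ≤ y'' i := by
        intro i
        by_cases hij : i = j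
        · subst hij; simp only [hy'', Function.update_self]; omega
        · simp only [hy'', Function.update_of_ne hij]; exact hle i
      have hTy'' : nimT 𝓗 y' ≤ nimT 𝓗 y'' + 1 := by
        have : nimT 𝓗 y' ≤ nimT 𝓗 (xdec y' {j}) + ({j} : Finset V).card :=
          nimT_xdec_ge hne {j}
        simp only [Finset.card_singleton] at this
        refine le_trans this ?_
        have : ∀ i, xdec y' {j} i ≤ y'' i := by
          intro i
          by_cases hij : i = j
          · subst hij; simp [xdec, hy'']
          · simp [xdec, hy'', hij, Function.update_of_ne hij]
        have := nimT_mono hne this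
        omega
      exact ih _ hsum' y y'' rfl hy1 hy2 h1'' h2'' hle'' k hk1 (by omega)

/-- double counting -/
lemma sum_usage (A : Finset V) (z : Multiset (Finset V)) :
    ∑ h ∈ A, usage z h = (z.map (fun e => (A ∩ e).card)).sum := by
  induction z using Multiset.induction_on with
  | empty => simp [usage]
  | cons e z ih =>
    simp only [Multiset.map_cons, Multiset.sum_cons, ← ih]
    calc ∑ h ∈ A, usage (e ::ₘ z) h
        = ∑ h ∈ A, (usage z h + if h ∈ e then 1 else 0) :=
          Finset.sum_congr rfl (fun h _ => usage_cons e z h)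
      _ = (∑ h ∈ A, usage z h) + ∑ h ∈ A, (if h ∈ e then 1 else 0) :=
          Finset.sum_add_distrib
      _ = (A ∩ e).card + ∑ h ∈ A, usage z h := by
          rw [add_comm]
          congr 1
          rw [Finset.sum_ite_mem, Finset.sum_const, smul_eq_mul, mul_one]

end Moves

/-! ### Key lemma: structure of the endgame -/

section Key

variable {V : Type*} [Fintype V] [DecidableEq V] {𝓗 : Set (Finset V)}

/-- support of a position as a finset -/
def suppF (x : V → ℕ) : Finset V := Finset.univ.filter (fun i => 0 < x i)

lemma mem_suppF {x : V → ℕ} {i : V} : i ∈ suppF x ↔ 0 < x i := by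
  simp [suppF]

lemma subset_suppF_sdiff {x : V → ℕ} {e D : Finset V} :
    e ⊆ suppF x \ D ↔ (∀ i ∈ e, 0 < x i) ∧ ∀ i ∈ e, i ∉ D := by
  constructor
  · intro h
    exact ⟨fun i hi => mem_suppF.1 (Finset.mem_sdiff.1 (h hi)).1,
      fun i hi => (Finset.mem_sdiff.1 (h hi)).2⟩
  · rintro ⟨h1, h2⟩ i hi
    exact Finset.mem_sdiff.2 ⟨mem_suppF.2 (h1 i hi), h2 i hi⟩

lemma usage_triple (a b c : Finset V) (i : V) :
    usage {a, b, c} i = (if i ∈ a then 1 else 0) + (if i ∈ b then 1 else 0)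
      + (if i ∈ c then 1 else 0) := by
  show Multiset.countP _ (a ::ₘ b ::ₘ c ::ₘ 0) = _
  simp only [Multiset.countP_cons, Multiset.countP_zero]
  ring

lemma usage_pair (p q : Finset V) (i : V) :
    usage ({p, q} : Multiset (Finset V)) i
      = (if i ∈ p then 1 else 0) + (if i ∈ q then 1 else 0) := by
  show Multiset.countP _ (p ::ₘ q ::ₘ 0) = _
  simp only [Multiset.countP_cons, Multiset.countP_zero]
  ring

lemma pack_congr {x : V → ℕ} {z z' : Multiset (Finset V)} (h : z = z')
    (hp : IsPack 𝓗 x z) : IsPack 𝓗 x z' := h ▸ hp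

lemma trip_swap₁₂ {x : V → ℕ} {a b c : Finset V} (hp : IsPack 𝓗 x {a, b, c}) :
    IsPack 𝓗 x {b, a, c} :=
  pack_congr (Multiset.cons_swap a b {c}) hp

lemma trip_swap₂₃ {x : V → ℕ} {a b c : Finset V} (hp : IsPack 𝓗 x {a, b, c}) :
    IsPack 𝓗 x {a, c, b} :=
  pack_congr (congrArg (a ::ₘ ·) (Multiset.cons_swap b c 0)) hp

/-- two edges of a triple packing cannot share a coordinate of value 1 -/
lemma trip_disj {x : V → ℕ} {w₁ w₂ w₃ : Finset V} (ht : IsPack 𝓗 x {w₁, w₂, w₃})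
    {a : V} (h1 : a ∈ w₁) (h2 : a ∈ w₂) (hx : x a = 1) : False := by
  have := ht.2 a
  rw [usage_triple] at this
  simp only [if_pos h1, if_pos h2] at this
  omega

lemma trip_disj₁₃ {x : V → ℕ} {w₁ w₂ w₃ : Finset V} (ht : IsPack 𝓗 x {w₁, w₂, w₃})
    {a : V} (h1 : a ∈ w₁) (h2 : a ∈ w₃) (hx : x a = 1) : False :=
  trip_disj (trip_swap₂₃ ht) h1 h2 hx

lemma trip_disj₂₃ {x : V → ℕ} {w₁ w₂ w₃ : Finset V} (ht : IsPack 𝓗 x {w₁, w₂, w₃})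
    {a : V} (h1 : a ∈ w₂) (h2 : a ∈ w₃) (hx : x a = 1) : False :=
  trip_disj (trip_swap₂₃ (trip_swap₁₂ ht)) h1 h2 hx

lemma trip_mem {x : V → ℕ} {w₁ w₂ w₃ : Finset V} (ht : IsPack 𝓗 x {w₁, w₂, w₃}) :
    w₁ ∈ 𝓗 ∧ w₂ ∈ 𝓗 ∧ w₃ ∈ 𝓗 := by
  refine ⟨ht.1 w₁ ?_, ht.1 w₂ ?_, ht.1 w₃ ?_⟩ <;> simp

variable (hne : ∀ H ∈ 𝓗, H.Nonempty) (hdim : ∀ H ∈ 𝓗, H.card ≤ 3)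
include hne

lemma trip_supp {x : V → ℕ} {w₁ w₂ w₃ : Finset V} (ht : IsPack 𝓗 x {w₁, w₂, w₃}) :
    (∀ i ∈ w₁, 0 < x i) ∧ (∀ i ∈ w₂, 0 < x i) ∧ (∀ i ∈ w₃, 0 < x i) := by
  refine ⟨pack_edge_supp hne ht (by simp), pack_edge_supp hne ht (by simp),
    pack_edge_supp hne ht (by simp)⟩

/-- a fragile edge meets every edge in the support, at a coordinate of value 1. -/
lemma fragile_meets {x : V → ℕ} {f : Finset V} (hfrag : nimT 𝓗 (xdec x f) = 0)
    {e : Finset V} (he : e ∈ 𝓗) (hes : ∀ i ∈ e, 0 < x i) :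
    ∃ a, a ∈ f ∧ a ∈ e ∧ x a = 1 := by
  by_contra hc
  push_neg at hc
  have : ∀ i ∈ e, 0 < xdec x f i := by
    intro i hi
    have hxi := hes i hi
    by_cases hif : i ∈ f
    · have := hc i hif hi
      simp only [xdec, if_pos hif]
      omega
    · simpa [xdec, hif] using hxi
  have : nimT 𝓗 (xdec x f) ≠ 0 := (nimT_ne_zero_iff hne).2 ⟨e, he, this⟩
  exact this hfrag

include hdim

/-- Structure of a fragile edge with respect to a triple packing. -/
lemma fragile_struct {x : V → ℕ} {f w₁ w₂ w₃ : Finset V}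
    (hf : f ∈ 𝓗) (hfrag : nimT 𝓗 (xdec x f) = 0)
    (ht : IsPack 𝓗 x {w₁, w₂, w₃}) :
    ∃ d₁ d₂ d₃, f = {d₁, d₂, d₃} ∧ (∀ i ∈ f, x i = 1) ∧
      d₁ ∈ w₁ ∧ d₂ ∈ w₂ ∧ d₃ ∈ w₃ ∧
      (∀ a ∈ f, a ∈ w₁ → a = d₁) ∧ (∀ a ∈ f, a ∈ w₂ → a = d₂) ∧
      (∀ a ∈ f, a ∈ w₃ → a = d₃) := by
  obtain ⟨hw₁, hw₂, hw₃⟩ := trip_mem ht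
  obtain ⟨hs₁, hs₂, hs₃⟩ := trip_supp hne ht
  obtain ⟨d₁, hd₁f, hd₁w, hd₁x⟩ := fragile_meets hne hfrag hw₁ hs₁
  obtain ⟨d₂, hd₂f, hd₂w, hd₂x⟩ := fragile_meets hne hfrag hw₂ hs₂
  obtain ⟨d₃, hd₃f, hd₃w, hd₃x⟩ := fragile_meets hne hfrag hw₃ hs₃
  have h12 : d₁ ≠ d₂ := by rintro rfl; exact trip_disj ht hd₁w hd₂w hd₁x
  have h13 : d₁ ≠ d₃ := by rintro rfl; exact trip_disj₁₃ ht hd₁w hd₃w hd₁x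
  have h23 : d₂ ≠ d₃ := by rintro rfl; exact trip_disj₂₃ ht hd₂w hd₃w hd₂x
  have hsub : {d₁, d₂, d₃} ⊆ f := by
    intro a ha
    simp only [Finset.mem_insert, Finset.mem_singleton] at ha
    rcases ha with rfl | rfl | rfl <;> assumption
  have hcard : ({d₁, d₂, d₃} : Finset V).card = 3 := by
    rw [Finset.card_insert_of_notMem (by simp [h12, h13]),
      Finset.card_insert_of_notMem (by simp [h23]), Finset.card_singleton]
  have hfeq : f = {d₁, d₂, d₃} :=
    (Finset.eq_of_subset_of_card_le hsub (hcard ▸ hdim f hf)).symm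
  have hone : ∀ i ∈ f, x i = 1 := by
    intro i hi
    rw [hfeq] at hi
    simp only [Finset.mem_insert, Finset.mem_singleton] at hi
    rcases hi with rfl | rfl | rfl <;> assumption
  refine ⟨d₁, d₂, d₃, hfeq, hone, hd₁w, hd₂w, hd₃w, ?_, ?_, ?_⟩
  · intro a haf haw
    rw [hfeq] at haf
    simp only [Finset.mem_insert, Finset.mem_singleton] at haf
    rcases haf with rfl | rfl | rfl
    · rfl
    · exact (trip_disj ht haw hd₂w hd₂x).elim
    · exact (trip_disj₁₃ ht haw hd₃w hd₃x).elim
  · intro a haf haw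
    rw [hfeq] at haf
    simp only [Finset.mem_insert, Finset.mem_singleton] at haf
    rcases haf with rfl | rfl | rfl
    · exact (trip_disj ht hd₁w haw hd₁x).elim
    · rfl
    · exact (trip_disj₂₃ ht haw hd₃w hd₃x).elim
  · intro a haf haw
    rw [hfeq] at haf
    simp only [Finset.mem_insert, Finset.mem_singleton] at haf
    rcases haf with rfl | rfl | rfl
    · exact (trip_disj₁₃ ht hd₁w haw hd₁x).elim
    · exact (trip_disj₂₃ ht hd₂w haw hd₂x).elim
    · rfl

/-- A robust edge extends to a triple packing by two edges disjoint from it. -/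
lemma robust_trip {x : V → ℕ} {e : Finset V} (he : e ∈ 𝓗) (hes : ∀ i ∈ e, 0 < x i)
    (hrob : 2 ≤ nimT 𝓗 (xzero x e)) :
    ∃ p q, IsPack 𝓗 x {e, p, q} ∧ (∀ i ∈ p, i ∉ e) ∧ (∀ i ∈ q, i ∉ e) := by
  obtain ⟨z, hz, hzc⟩ := pack_exists hne (nimT 𝓗 (xzero x e)) (xzero x e) rfl
  have h2 : 2 ≤ z.card := hzc ▸ hrob
  obtain ⟨p, hp⟩ := Multiset.exists_mem_of_ne_zero
    (show z ≠ 0 by intro h; rw [h] at h2; simp at h2)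
  have hq' : z.erase p ≠ 0 := by
    intro h
    have := Multiset.card_erase_of_mem hp
    rw [h] at this
    simp at this
    omega
  obtain ⟨q, hq⟩ := Multiset.exists_mem_of_ne_zero hq'
  have hle : ({p, q} : Multiset (Finset V)) ≤ z := by
    rw [← Multiset.cons_erase hp]
    exact Multiset.cons_le_cons p (Multiset.singleton_le.2 hq)
  have husage : ∀ i, usage {p, q} i ≤ xzero x e i :=
    fun i => le_trans (usage_le_of_le hle i) (hz.2 i)
  have hpq_mem : p ∈ 𝓗 ∧ q ∈ 𝓗 :=
    ⟨hz.1 p hp, hz.1 q (Multiset.mem_of_mem_erase hq)⟩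
  have hpe : ∀ i ∈ p, i ∉ e := by
    intro i hip hie
    have : 0 < usage {p, q} i := usage_pos_iff.2 ⟨p, by simp, hip⟩
    have := husage i
    simp only [xzero, if_pos hie] at this
    omega
  have hqe : ∀ i ∈ q, i ∉ e := by
    intro i hiq hie
    have : 0 < usage {p, q} i := usage_pos_iff.2 ⟨q, by simp, hiq⟩
    have := husage i
    simp only [xzero, if_pos hie] at this
    omega
  refine ⟨p, q, ⟨?_, ?_⟩, hpe, hqe⟩
  · intro e' he'
    rcases Multiset.mem_cons.1 he' with rfl | he'
    · exact he
    rcases Multiset.mem_cons.1 he' with rfl | he'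
    · exact hpq_mem.1
    · rw [Multiset.mem_singleton] at he'
      exact he' ▸ hpq_mem.2
  · intro i
    rw [usage_triple]
    have h2 := husage i
    rw [usage_pair] at h2
    by_cases hie : i ∈ e
    · have h3 : i ∉ p := fun h => hpe i h hie
      have h4 : i ∉ q := fun h => hqe i h hie
      have := hes i hie
      simp only [if_pos hie, if_neg h3, if_neg h4]
      omega
    · simp only [xzero, if_neg hie] at h2
      simp only [if_neg hie]
      omega

/-- Witness of the induced subhypergraph on `suppF x \ D`, with the pair
structure in the robust case. -/
lemma witness_classify (hstar : CondStar 𝓗) {x : V → ℕ} (D : Finset V)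
    (hD : ∃ e ∈ 𝓗, e ⊆ suppF x \ D) :
    ∃ W, W ∈ 𝓗 ∧ W ⊆ suppF x \ D ∧
      (∀ e ∈ 𝓗, e ⊆ suppF x \ D → (W ∩ e).Nonempty) ∧
      (2 ≤ nimT 𝓗 (xzero x W) →
        ∃ p q, IsPack 𝓗 x {W, p, q} ∧ (∀ i ∈ p, i ∉ W) ∧ (∀ i ∈ q, i ∉ W) ∧
          (∃ d ∈ D, d ∈ p) ∧ (∃ d ∈ D, d ∈ q)) := by
  obtain ⟨W, hW, hWsub, hWtrans⟩ := hstar _ hD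
  refine ⟨W, hW, hWsub, hWtrans, fun hrob => ?_⟩
  have hWsupp : ∀ i ∈ W, 0 < x i := (subset_suppF_sdiff.1 hWsub).1
  obtain ⟨p, q, htrip, hpe, hqe⟩ := robust_trip hne hdim hW hWsupp hrob
  obtain ⟨hsW, hsp, hsq⟩ := trip_supp hne htrip
  obtain ⟨-, hpmem, hqmem⟩ := trip_mem htrip
  have hmeet : ∀ (r : Finset V), r ∈ 𝓗 → (∀ i ∈ r, 0 < x i) → (∀ i ∈ r, i ∉ W) →
      ∃ d ∈ D, d ∈ r := by
    intro r hr hrs hrW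
    by_contra hc
    push_neg at hc
    have hrsub : r ⊆ suppF x \ D := subset_suppF_sdiff.2 ⟨hrs, fun i hi hid => hc i hid hi⟩
    obtain ⟨a, ha⟩ := hWtrans r hr hrsub
    rw [Finset.mem_inter] at ha
    exact hrW a ha.2 ha.1
  exact ⟨p, q, htrip, hpe, hqe, hmeet p hpmem hsp hpe, hmeet q hqmem hsq hqe⟩

/-- For any coordinate `u` of value 1, there is a fragile edge avoiding `u`. -/
lemma exists_fragile_avoiding (hstar : CondStar 𝓗) {x : V → ℕ}
    (hgap : ∀ e, e ∈ 𝓗 → (∀ i ∈ e, 0 < x i) →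
      nimT 𝓗 (xdec x e) = 0 ∨ 2 ≤ nimT 𝓗 (xzero x e))
    {w₁ w₂ w₃ : Finset V} (hM : IsPack 𝓗 x {w₁, w₂, w₃}) (u : V) (hu : x u = 1) :
    ∃ F, F ∈ 𝓗 ∧ (∀ i ∈ F, 0 < x i) ∧ nimT 𝓗 (xdec x F) = 0 ∧ u ∉ F := by
  obtain ⟨hw₁, hw₂, hw₃⟩ := trip_mem hM
  obtain ⟨hs₁, hs₂, hs₃⟩ := trip_supp hne hM
  have hexist : ∃ e, e ∈ 𝓗 ∧ (∀ i ∈ e, 0 < x i) ∧ u ∉ e := by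
    by_cases h1 : u ∈ w₁
    · by_cases h2 : u ∈ w₂
      · exact (trip_disj hM h1 h2 hu).elim
      · exact ⟨w₂, hw₂, hs₂, h2⟩
    · exact ⟨w₁, hw₁, hs₁, h1⟩
  obtain ⟨e, he, hes, hue⟩ := hexist
  obtain ⟨W, hW, hWsub, hWtrans, hWrob⟩ := witness_classify hne hdim hstar {u}
    ⟨e, he, subset_suppF_sdiff.2 ⟨hes, fun i hi hiu =>
      hue ((Finset.mem_singleton.1 hiu) ▸ hi)⟩⟩
  have hWsupp : ∀ i ∈ W, 0 < x i := (subset_suppF_sdiff.1 hWsub).1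
  have huW : u ∉ W := fun h => (subset_suppF_sdiff.1 hWsub).2 u h (Finset.mem_singleton.2 rfl)
  rcases hgap W hW hWsupp with hfrag | hrob
  · exact ⟨W, hW, hWsupp, hfrag, huW⟩
  · obtain ⟨p, q, htrip, -, -, ⟨d₁, hd₁, hd₁p⟩, ⟨d₂, hd₂, hd₂q⟩⟩ := hWrob hrob
    rw [Finset.mem_singleton] at hd₁ hd₂
    subst hd₁; subst hd₂
    exact (trip_disj₂₃ htrip hd₁p hd₂q hu).elim

/-- Core lemma for confining the `z₁`-representatives of fragile edges to `p`. -/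
lemma core_R (hstar : CondStar 𝓗) {x : V → ℕ}
    (hgap : ∀ e, e ∈ 𝓗 → (∀ i ∈ e, 0 < x i) →
      nimT 𝓗 (xdec x e) = 0 ∨ 2 ≤ nimT 𝓗 (xzero x e))
    {z₁ zA zB E₁ p q Hs : Finset V} {h₁ hA hB : V}
    (hM : IsPack 𝓗 x {z₁, zA, zB})
    (hQ : IsPack 𝓗 x {E₁, p, q})
    (htrans : ∀ e ∈ 𝓗, (∀ i ∈ e, 0 < x i) → (Hs ∩ e).Nonempty)
    (hHsmem : ∀ y ∈ Hs, y = h₁ ∨ y = hA ∨ y = hB)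
    (hone : ∀ i ∈ Hs, x i = 1)
    (hh₁z : h₁ ∈ z₁) (hhAz : hA ∈ zA) (hhBz : hB ∈ zB)
    (hh₁Hs : h₁ ∈ Hs) (hhAHs : hA ∈ Hs) (hhBHs : hB ∈ Hs)
    (hh₁p : h₁ ∈ p) (hhAq : hA ∈ q) (hhBE : hB ∈ E₁)
    (hE₁D : ∀ a, a ∈ z₁ → x a = 1 → a ∉ E₁)
    {F : Finset V} (hF : F ∈ 𝓗) (hFs : ∀ i ∈ F, 0 < x i)
    (hFfrag : nimT 𝓗 (xdec x F) = 0)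
    {r : V} (hrF : r ∈ F) (hrz : r ∈ z₁) : r ∈ p := by
  by_contra hrp
  -- structure of F with respect to M and Q
  obtain ⟨r₁, fA, fB, hFeq, hFone, hr₁z, hfAz, hfBz, huniq₁, huniqA, huniqB⟩ :=
    fragile_struct hne hdim hF hFfrag hM
  obtain ⟨b₁, b₂, b₃, hFeq', hFone', hb₁E, hb₂p, hb₃q, huniqE, huniqP, huniqQ⟩ :=
    fragile_struct hne hdim hF hFfrag hQ
  have hrx : x r = 1 := hFone r hrF
  have hr₁ : r = r₁ := huniq₁ r hrF hrz
  -- r is in q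
  have hrq : r ∈ q := by
    have h' : r ∈ F := hrF
    rw [hFeq'] at h'
    simp only [Finset.mem_insert, Finset.mem_singleton] at h'
    rcases h' with h' | h' | h'
    · exact absurd (h'.symm ▸ hb₁E) (hE₁D r hrz hrx)
    · exact absurd (h'.symm ▸ hb₂p) hrp
    · exact h'.symm ▸ hb₃q
  -- the witness Hs meets F
  obtain ⟨y, hy⟩ := htrans F hF hFs
  rw [Finset.mem_inter] at hy
  obtain ⟨hyHs, hyF⟩ := hy
  rcases hHsmem y hyHs with rfl | rfl | rfl
  · -- y = h₁ ∈ F ∩ z₁ so h₁ = r, contradiction with h₁ ∈ p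
    have : y = r := hr₁ ▸ huniq₁ y hyF hh₁z
    exact hrp (this ▸ hh₁p)
  · -- y = hA ∈ F ∩ q so hA = r, contradiction: hA ∈ zA, r ∈ z₁
    have : y = r := by
      have h1 : y = b₃ := huniqQ y hyF hhAq
      have h2 : r = b₃ := huniqQ r hrF hrq
      rw [h1, ← h2]
    subst this
    exact trip_disj hM hrz hhAz hrx
  · -- y = hB ∈ F: the main case
    have hfBy : fB = y := (huniqB y hyF hhBz).symm
    have hb₁y : b₁ = y := (huniqE y hyF hhBE).symm
    -- b₂ = fA
    have hb₂F : b₂ ∈ F := by rw [hFeq']; simp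
    have hb₂fA : b₂ = fA := by
      rw [hFeq] at hb₂F
      simp only [Finset.mem_insert, Finset.mem_singleton] at hb₂F
      rcases hb₂F with rfl | rfl | rfl
      · rw [hr₁] at hrp; exact absurd hb₂p hrp
      · rfl
      · rw [hfBy] at hb₂p
        exact (trip_disj hQ hhBE hb₂p (hone y hyHs)).elim
    -- G: a fragile edge avoiding y (= hB)
    obtain ⟨G, hG, hGs, hGfrag, hyG⟩ := exists_fragile_avoiding hne hdim hstar hgap hM y
      (hone y hyHs)
    obtain ⟨g₁, gA, gB, hGeq, hGone, hg₁z, hgAz, hgBz, hGuniq₁, hGuniqA, hGuniqB⟩ :=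
      fragile_struct hne hdim hG hGfrag hM
    obtain ⟨e₁, e₂, e₃, hGeq', hGone', he₁E, he₂p, he₃q, hGuniqE, hGuniqP, hGuniqQ⟩ :=
      fragile_struct hne hdim hG hGfrag hQ
    -- Hs meets G
    obtain ⟨w, hw⟩ := htrans G hG hGs
    rw [Finset.mem_inter] at hw
    obtain ⟨hwHs, hwG⟩ := hw
    -- F meets G
    obtain ⟨w', hw'F, hw'G, hw'x⟩ := fragile_meets hne hFfrag hG hGs
    have hw'cases : w' = r ∨ w' = fA := by
      have h' : w' ∈ F := hw'F
      rw [hFeq] at h'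
      simp only [Finset.mem_insert, Finset.mem_singleton] at h'
      rcases h' with h' | h' | h'
      · left; rw [h', ← hr₁]
      · right; exact h'
      · exfalso; rw [h'] at hw'G; exact hyG (hfBy ▸ hw'G)
    rcases hHsmem w hwHs with hwc | hwc | hwc
    · rcases hw'cases with hc | hc
      · -- h₁ and r both in G ∩ z₁
        have e1 : w = g₁ := hGuniq₁ w hwG (by rw [hwc]; exact hh₁z)
        have e2 : w' = g₁ := hGuniq₁ w' hw'G (by rw [hc]; exact hrz)
        have h3 : h₁ = r := by rw [← hwc, e1, ← e2, hc]
        exact hrp (h3 ▸ hh₁p)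
      · -- h₁ and fA both in G ∩ p
        have e1 : w = e₂ := hGuniqP w hwG (by rw [hwc]; exact hh₁p)
        have e2 : w' = e₂ := hGuniqP w' hw'G (by rw [hc, ← hb₂fA]; exact hb₂p)
        have h3 : w = w' := by rw [e1, ← e2]
        exact trip_disj hM (a := w) (by rw [hwc]; exact hh₁z)
          (by rw [h3, hc]; exact hfAz) (hone w hwHs)
    · rcases hw'cases with hc | hc
      · -- hA and r both in G ∩ q
        have e1 : w = e₃ := hGuniqQ w hwG (by rw [hwc]; exact hhAq)
        have e2 : w' = e₃ := hGuniqQ w' hw'G (by rw [hc]; exact hrq)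
        have h3 : w = w' := by rw [e1, ← e2]
        exact trip_disj hM (a := w) (by rw [h3, hc]; exact hrz)
          (by rw [hwc]; exact hhAz) (hone w hwHs)
      · -- hA and fA both in G ∩ zA
        have e1 : w = gA := hGuniqA w hwG (by rw [hwc]; exact hhAz)
        have e2 : w' = gA := hGuniqA w' hw'G (by rw [hc]; exact hfAz)
        have h3 : w = w' := by rw [e1, ← e2]
        exact trip_disj₂₃ hQ (a := w) (by rw [h3, hc, ← hb₂fA]; exact hb₂p)
          (by rw [hwc]; exact hhAq) (hone w hwHs)
    · -- w = hB (= y) is not in G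
      rw [hwc] at hwG
      exact hyG hwG

/-- Final contradiction of the endgame. -/
lemma core_final (hstar : CondStar 𝓗) {x : V → ℕ}
    (hgap : ∀ e, e ∈ 𝓗 → (∀ i ∈ e, 0 < x i) →
      nimT 𝓗 (xdec x e) = 0 ∨ 2 ≤ nimT 𝓗 (xzero x e))
    {z₁ zA zB X u v Hs K : Finset V} {h₁ hA hB s₁ : V}
    (hM : IsPack 𝓗 x {z₁, zA, zB})
    (hQ : IsPack 𝓗 x {X, u, v})
    (htrans : ∀ e ∈ 𝓗, (∀ i ∈ e, 0 < x i) → (Hs ∩ e).Nonempty)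
    (hHsmem : ∀ y ∈ Hs, y = h₁ ∨ y = hA ∨ y = hB)
    (hone : ∀ i ∈ Hs, x i = 1)
    (hhAHs : hA ∈ Hs) (hhBHs : hB ∈ Hs)
    (hh₁z : h₁ ∈ z₁) (hhAz : hA ∈ zA) (hhBz : hB ∈ zB)
    (hh₁u : h₁ ∈ u) (hhAX : hA ∈ X) (hhBv : hB ∈ v)
    (hK : K ∈ 𝓗) (hKs : ∀ i ∈ K, 0 < x i) (hKfrag : nimT 𝓗 (xdec x K) = 0)
    (hh₁K : h₁ ∉ K) (hs₁K : s₁ ∈ K) (hs₁z : s₁ ∈ z₁) (hs₁v : s₁ ∈ v) : False := by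
  have hs₁x : x s₁ = 1 := by
    obtain ⟨-, hone', -⟩ :=
      (fragile_struct hne hdim hK hKfrag hM).choose_spec.choose_spec.choose_spec
    exact hone' s₁ hs₁K
  have hBs₁ : hB ≠ s₁ := by
    intro h
    exact trip_disj₁₃ hM (a := s₁) hs₁z (h ▸ hhBz) hs₁x
  -- structure of K with respect to Q = {X, u, v}
  obtain ⟨d₁, d₂, d₃, hKeq', hKone', hd₁X, hd₂u, hd₃v, hKuniqX, hKuniqU, hKuniqV⟩ :=
    fragile_struct hne hdim hK hKfrag hQ
  obtain ⟨κ₁, κA, κB, hKeq, hKone, hκ₁z, hκAz, hκBz, hKuniq₁, hKuniqA, hKuniqB⟩ :=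
    fragile_struct hne hdim hK hKfrag hM
  -- Hs meets K, necessarily in hA
  have hhAK : hA ∈ K := by
    obtain ⟨y, hy⟩ := htrans K hK hKs
    rw [Finset.mem_inter] at hy
    obtain ⟨hyHs, hyK⟩ := hy
    rcases hHsmem y hyHs with hyc | hyc | hyc
    · exact absurd (hyc ▸ hyK) hh₁K
    · exact hyc ▸ hyK
    · -- y = hB ∈ K ∩ v, so hB = d₃ = s₁: contradiction
      exfalso
      have e1 : y = d₃ := hKuniqV y hyK (by rw [hyc]; exact hhBv)
      have e2 : s₁ = d₃ := hKuniqV s₁ hs₁K hs₁v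
      exact hBs₁ (by rw [← hyc, e1, ← e2])
  -- s₂ : the third vertex of K, lives in u and in zB
  have hs₁d₃ : s₁ = d₃ := hKuniqV s₁ hs₁K hs₁v
  have hhAd₁ : hA = d₁ := hKuniqX hA hhAK hhAX
  have hd₂K : d₂ ∈ K := by rw [hKeq']; simp
  have hd₂x : x d₂ = 1 := hKone' d₂ hd₂K
  have hs₂zB : d₂ ∈ zB := by
    have h' : d₂ ∈ K := hd₂K
    rw [hKeq] at h'
    simp only [Finset.mem_insert, Finset.mem_singleton] at h'
    have hκ₁s : κ₁ = s₁ := (hKuniq₁ s₁ hs₁K hs₁z).symm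
    have hκAA : κA = hA := (hKuniqA hA hhAK hhAz).symm
    rcases h' with h' | h' | h'
    · -- d₂ = κ₁ = s₁ ∈ u ∩ v
      exfalso
      rw [h', hκ₁s] at hd₂u
      exact trip_disj₂₃ hQ hd₂u hs₁v hs₁x
    · -- d₂ = κA = hA ∈ X ∩ u
      exfalso
      rw [h', hκAA] at hd₂u
      exact trip_disj hQ hhAX hd₂u (hone hA hhAHs)
    · exact h' ▸ hκBz
  -- L : fragile edge avoiding hA
  obtain ⟨L, hL, hLs, hLfrag, hAL⟩ := exists_fragile_avoiding hne hdim hstar hgap hM hA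
    (hone hA hhAHs)
  obtain ⟨l₁, lA, lB, hLeq, hLone, hl₁z, hlAz, hlBz, hLuniq₁, hLuniqA, hLuniqB⟩ :=
    fragile_struct hne hdim hL hLfrag hM
  obtain ⟨m₁, m₂, m₃, hLeq', hLone', hm₁X, hm₂u, hm₃v, hLuniqX, hLuniqU, hLuniqV⟩ :=
    fragile_struct hne hdim hL hLfrag hQ
  -- Hs meets L
  obtain ⟨a, ha⟩ := htrans L hL hLs
  rw [Finset.mem_inter] at ha
  obtain ⟨haHs, haL⟩ := ha
  -- K meets L
  obtain ⟨b, hbK, hbL, hbx⟩ := fragile_meets hne hKfrag hL hLs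
  have hbcases : b = s₁ ∨ b = d₂ := by
    have h' : b ∈ K := hbK
    rw [hKeq'] at h'
    simp only [Finset.mem_insert, Finset.mem_singleton] at h'
    rcases h' with h' | h' | h'
    · exact absurd (by rw [← hhAd₁] at h'; exact h' ▸ hbL) hAL
    · right; exact h'
    · left; rw [h', ← hs₁d₃]
  rcases hHsmem a haHs with hac | hac | hac
  · -- a = h₁
    rcases hbcases with hbc | hbc
    · -- h₁ and s₁ both in L ∩ z₁, so h₁ = s₁ ∈ K: contradiction
      have e1 : a = l₁ := hLuniq₁ a haL (by rw [hac]; exact hh₁z)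
      have e2 : b = l₁ := hLuniq₁ b hbL (by rw [hbc]; exact hs₁z)
      have : h₁ = s₁ := by rw [← hac, e1, ← e2, hbc]
      exact hh₁K (this ▸ hs₁K)
    · -- h₁ and s₂ both in L ∩ u, so h₁ = d₂ ∈ K: contradiction
      have e1 : a = m₂ := hLuniqU a haL (by rw [hac]; exact hh₁u)
      have e2 : b = m₂ := hLuniqU b hbL (by rw [hbc]; exact hd₂u)
      have : h₁ = d₂ := by rw [← hac, e1, ← e2, hbc]
      exact hh₁K (this ▸ hd₂K)
  · -- a = hA ∉ L
    exact hAL (hac ▸ haL)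
  · -- a = hB
    rcases hbcases with hbc | hbc
    · -- hB and s₁ both in L ∩ v, so hB = s₁: contradiction
      have e1 : a = m₃ := hLuniqV a haL (by rw [hac]; exact hhBv)
      have e2 : b = m₃ := hLuniqV b hbL (by rw [hbc]; exact hs₁v)
      exact hBs₁ (by rw [← hac, e1, ← e2, hbc])
    · -- hB and s₂ both in L ∩ zB, so hB = d₂ ∈ u ∩ v: contradiction
      have e1 : a = lB := hLuniqB a haL (by rw [hac]; exact hhBz)
      have e2 : b = lB := hLuniqB b hbL (by rw [hbc]; exact hs₂zB)
      have h3 : hB = d₂ := by rw [← hac, e1, ← e2, hbc]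
      exact trip_disj₂₃ hQ (a := hB) (h3 ▸ hd₂u) hhBv (hone hB hhBHs)

/-- Stage 2: with the witness `E₁` and its pair `(p, q)` fully oriented, derive the
final contradiction. -/
lemma stage2 (hstar : CondStar 𝓗) {x : V → ℕ}
    (hgap : ∀ e, e ∈ 𝓗 → (∀ i ∈ e, 0 < x i) →
      nimT 𝓗 (xdec x e) = 0 ∨ 2 ≤ nimT 𝓗 (xzero x e))
    {z₁ zA zB E₁ p q Hs : Finset V} {h₁ hA hB dq : V}
    (hM : IsPack 𝓗 x {z₁, zA, zB})
    (hQ : IsPack 𝓗 x {E₁, p, q})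
    (htrans : ∀ e ∈ 𝓗, (∀ i ∈ e, 0 < x i) → (Hs ∩ e).Nonempty)
    (hHs : Hs ∈ 𝓗) (hHsfrag : nimT 𝓗 (xdec x Hs) = 0)
    (hHsmem : ∀ y ∈ Hs, y = h₁ ∨ y = hA ∨ y = hB)
    (hone : ∀ i ∈ Hs, x i = 1)
    (hh₁Hs : h₁ ∈ Hs) (hhAHs : hA ∈ Hs) (hhBHs : hB ∈ Hs)
    (hh₁z : h₁ ∈ z₁) (hhAz : hA ∈ zA) (hhBz : hB ∈ zB)
    (hh₁p : h₁ ∈ p) (hhAq : hA ∈ q) (hhBE : hB ∈ E₁)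
    (hE₁D : ∀ a, a ∈ z₁ → x a = 1 → a ∉ E₁)
    (hdqq : dq ∈ q) (hdqz : dq ∈ z₁) (hdqx : x dq = 1) : False := by
  have hrep : ∀ F : Finset V, F ∈ 𝓗 → (∀ i ∈ F, 0 < x i) →
      nimT 𝓗 (xdec x F) = 0 → ∀ r, r ∈ F → r ∈ z₁ → r ∈ p := by
    intro F hF hFs hFfrag r hrF hrz
    exact core_R hne hdim hstar hgap hM hQ htrans hHsmem hone hh₁z hhAz hhBz
      hh₁Hs hhAHs hhBHs hh₁p hhAq hhBE hE₁D hF hFs hFfrag hrF hrz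
  -- K : fragile edge avoiding h₁; s₁ its z₁-representative
  obtain ⟨K, hK, hKs, hKfrag, hh₁K⟩ := exists_fragile_avoiding hne hdim hstar hgap hM h₁
    (hone h₁ hh₁Hs)
  obtain ⟨κ₁, κA, κB, hKeq, hKone, hκ₁z, hκAz, hκBz, hKuniq₁, hKuniqA, hKuniqB⟩ :=
    fragile_struct hne hdim hK hKfrag hM
  set s₁ := κ₁ with hs₁def
  have hs₁K : s₁ ∈ K := by rw [hKeq]; simp
  have hs₁x : x s₁ = 1 := hKone s₁ hs₁K
  have hs₁p : s₁ ∈ p := hrep K hK hKs hKfrag s₁ hs₁K hκ₁z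
  have hh₁s₁ : h₁ ≠ s₁ := fun h => hh₁K (h ▸ hs₁K)
  -- the witness X on the support minus {h₁, s₁}
  have hdisj2 : ∀ i ∈ zA, i ∉ ({h₁, s₁} : Finset V) := by
    intro i hi hmem
    rw [Finset.mem_insert, Finset.mem_singleton] at hmem
    rcases hmem with rfl | rfl
    · exact trip_disj hM hh₁z hi (hone i hh₁Hs)
    · exact trip_disj hM hκ₁z hi hs₁x
  obtain ⟨hzAmem, -⟩ := (trip_mem (trip_swap₁₂ hM) : zA ∈ 𝓗 ∧ _)
  obtain ⟨-, hzAs, -⟩ := trip_supp hne hM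
  obtain ⟨X, hX, hXsub, hXtrans, hXrob⟩ := witness_classify hne hdim hstar {h₁, s₁}
    ⟨zA, hzAmem, subset_suppF_sdiff.2 ⟨hzAs, hdisj2⟩⟩
  have hXs : ∀ i ∈ X, 0 < x i := (subset_suppF_sdiff.1 hXsub).1
  have hXD : ∀ a ∈ X, a ≠ h₁ ∧ a ≠ s₁ := by
    intro a ha
    have := (subset_suppF_sdiff.1 hXsub).2 a ha
    rw [Finset.mem_insert, Finset.mem_singleton] at this
    push_neg at this
    exact this
  -- X cannot be fragile
  rcases hgap X hX hXs with hXfrag | hXrob'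
  · -- fragile X has a z₁-representative in p, giving 4 distinct elements of z₁
    obtain ⟨ξ, ξA, ξB, hXeq, hXone, hξz, hξAz, hξBz, -, -, -⟩ :=
      fragile_struct hne hdim hX hXfrag hM
    have hξX : ξ ∈ X := by rw [hXeq]; simp
    have hξp : ξ ∈ p := hrep X hX hXs hXfrag ξ hξX hξz
    have hξx : x ξ = 1 := hXone ξ hξX
    obtain ⟨hξh₁, hξs₁⟩ := hXD ξ hξX
    -- dq is distinct from h₁, s₁, ξ since those are in p and dq ∈ q
    have hdqp : ∀ w : V, w ∈ p → x w = 1 → dq ≠ w := by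
      intro w hw hwx h
      exact trip_disj₂₃ hQ (a := w) hw (h ▸ hdqq) hwx
    have h4 : ({dq, h₁, s₁, ξ} : Finset V) ⊆ z₁ := by
      intro a ha
      simp only [Finset.mem_insert, Finset.mem_singleton] at ha
      rcases ha with rfl | rfl | rfl | rfl
      · exact hdqz
      · exact hh₁z
      · exact hκ₁z
      · exact hξz
    have hcard4 : ({dq, h₁, s₁, ξ} : Finset V).card = 4 := by
      rw [Finset.card_insert_of_notMem, Finset.card_insert_of_notMem,
        Finset.card_insert_of_notMem, Finset.card_singleton]
      · simp only [Finset.mem_singleton]; exact fun h => hξs₁ h.symm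
      · simp only [Finset.mem_insert, Finset.mem_singleton]
        push_neg
        exact ⟨hh₁s₁, fun h => hξh₁ h.symm⟩
      · simp only [Finset.mem_insert, Finset.mem_singleton]
        push_neg
        exact ⟨hdqp h₁ hh₁p (hone h₁ hh₁Hs), hdqp s₁ hs₁p hs₁x, hdqp ξ hξp hξx⟩
    obtain ⟨hz₁mem, -, -⟩ := trip_mem hM
    have := Finset.card_le_card h4
    rw [hcard4] at this
    have := hdim z₁ hz₁mem
    omega
  · -- X robust: obtain the pair (u, v)
    obtain ⟨u, v, hQ', huX, hvX, ⟨du, hduD, hduu⟩, ⟨dv, hdvD, hdvv⟩⟩ := hXrob hXrob'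
    rw [Finset.mem_insert, Finset.mem_singleton] at hduD hdvD
    -- orient u and v
    have horient : (h₁ ∈ u ∧ s₁ ∈ v) ∨ (s₁ ∈ u ∧ h₁ ∈ v) := by
      rcases hduD with h | h <;> rcases hdvD with h' | h'
      · refine (trip_disj₂₃ hQ' (a := du) hduu ?_ ?_).elim
        · rw [h, ← h']; exact hdvv
        · rw [h]; exact hone h₁ hh₁Hs
      · exact Or.inl ⟨h ▸ hduu, h' ▸ hdvv⟩
      · exact Or.inr ⟨h ▸ hduu, h' ▸ hdvv⟩
      · refine (trip_disj₂₃ hQ' (a := du) hduu ?_ ?_).elim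
        · rw [h, ← h']; exact hdvv
        · rw [h]; exact hs₁x

    -- reduce to the case h₁ ∈ u, s₁ ∈ v
    have main : ∀ u' v' : Finset V, IsPack 𝓗 x {X, u', v'} → h₁ ∈ u' → s₁ ∈ v' → False := by
      intro u' v' hQ'' hh₁u hs₁v
      -- find the Hs-vertex in X
      obtain ⟨c₁, c₂, c₃, hHeq, -, hc₁X, hc₂u, hc₃v, hHuX, hHuU, hHuV⟩ :=
        fragile_struct hne hdim hHs hHsfrag hQ''
      have hc₁Hs : c₁ ∈ Hs := by rw [hHeq]; simp
      have hc₃Hs : c₃ ∈ Hs := by rw [hHeq]; simp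
      rcases hHsmem c₁ hc₁Hs with hc | hc | hc
      · -- c₁ = h₁ would lie in X ∩ u'
        exact trip_disj hQ'' (a := c₁) hc₁X (by rw [hc]; exact hh₁u) (hone c₁ hc₁Hs)
      · -- c₁ = hA : then hB = c₃ ∈ v'
        have hBc₃ : hB = c₃ := by
          rcases hHsmem c₃ hc₃Hs with hc' | hc' | hc'
          · exact (trip_disj₂₃ hQ'' (a := c₃) (by rw [hc']; exact hh₁u) hc₃v
              (hone c₃ hc₃Hs)).elim
          · exfalso
            have h3 : c₃ = c₁ := by rw [hc', ← hc]
            exact trip_disj₁₃ hQ'' (a := c₃) (h3 ▸ hc₁X) hc₃v (hone c₃ hc₃Hs)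
          · exact hc'.symm
        exact core_final hne hdim hstar hgap hM hQ'' htrans hHsmem hone hhAHs hhBHs
          hh₁z hhAz hhBz hh₁u (hc ▸ hc₁X) (hBc₃ ▸ hc₃v) hK hKs hKfrag hh₁K hs₁K hκ₁z hs₁v
      · -- c₁ = hB : symmetric, swap the roles of (zA, hA) and (zB, hB)
        have hAc₃ : hA = c₃ := by
          rcases hHsmem c₃ hc₃Hs with hc' | hc' | hc'
          · exact (trip_disj₂₃ hQ'' (a := c₃) (by rw [hc']; exact hh₁u) hc₃v
              (hone c₃ hc₃Hs)).elim
          · exact hc'.symm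
          · exfalso
            have h3 : c₃ = c₁ := by rw [hc', ← hc]
            exact trip_disj₁₃ hQ'' (a := c₃) (h3 ▸ hc₁X) hc₃v (hone c₃ hc₃Hs)
        exact core_final hne hdim hstar hgap (trip_swap₂₃ hM) hQ'' htrans
          (fun y hy => by
            rcases hHsmem y hy with h | h | h
            exacts [Or.inl h, Or.inr (Or.inr h), Or.inr (Or.inl h)])
          hone hhBHs hhAHs hh₁z hhBz hhAz hh₁u (hc ▸ hc₁X) (hAc₃ ▸ hc₃v)
          hK hKs hKfrag hh₁K hs₁K hκ₁z hs₁v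
    rcases horient with ⟨h1, h2⟩ | ⟨h1, h2⟩
    · exact main u v hQ' h1 h2
    · exact main v u (trip_swap₂₃ hQ') h2 h1

/-- The endgame: at `T x = 3`, under condition (*), some edge admits a move to a
position of Tetris value 1; otherwise contradiction. -/
lemma endgame (hstar : CondStar 𝓗) {x : V → ℕ} (hx3 : nimT 𝓗 x = 3)
    (hgap : ∀ e, e ∈ 𝓗 → (∀ i ∈ e, 0 < x i) →
      nimT 𝓗 (xdec x e) = 0 ∨ 2 ≤ nimT 𝓗 (xzero x e)) : False := by
  obtain ⟨z, hzpack, hzc⟩ := pack_exists hne 3 x hx3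
  obtain ⟨z₁, zA, zB, rfl⟩ := Multiset.card_eq_three.1 hzc
  have hM : IsPack 𝓗 x {z₁, zA, zB} := hzpack
  obtain ⟨hz₁m, hzAm, hzBm⟩ := trip_mem hM
  obtain ⟨hz₁s, hzAs, hzBs⟩ := trip_supp hne hM
  -- global witness Hs
  obtain ⟨Hs, hHs, hHssub, hHstrans0, hHsrob⟩ := witness_classify hne hdim hstar ∅
    ⟨z₁, hz₁m, subset_suppF_sdiff.2 ⟨hz₁s, by simp⟩⟩
  have hHss : ∀ i ∈ Hs, 0 < x i := (subset_suppF_sdiff.1 hHssub).1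
  have htrans : ∀ e ∈ 𝓗, (∀ i ∈ e, 0 < x i) → (Hs ∩ e).Nonempty :=
    fun e he hes => hHstrans0 e he (subset_suppF_sdiff.2 ⟨hes, by simp⟩)
  have hHsfrag : nimT 𝓗 (xdec x Hs) = 0 := by
    rcases hgap Hs hHs hHss with h | h
    · exact h
    · obtain ⟨p, q, -, -, -, ⟨d, hd, -⟩, -⟩ := hHsrob h
      exact absurd hd (Finset.notMem_empty d)
  -- structure of Hs with respect to M
  obtain ⟨h₁, hA, hB, hHseq, hone, hh₁z, hhAz, hhBz, -, -, -⟩ :=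
    fragile_struct hne hdim hHs hHsfrag hM
  have hHsmem : ∀ y ∈ Hs, y = h₁ ∨ y = hA ∨ y = hB := by
    intro y hy; rw [hHseq] at hy; simpa using hy
  have hh₁Hs : h₁ ∈ Hs := by rw [hHseq]; simp
  have hhAHs : hA ∈ Hs := by rw [hHseq]; simp
  have hhBHs : hB ∈ Hs := by rw [hHseq]; simp
  -- witness E₁ avoiding the unit coordinates of z₁
  have hzAD : ∀ i ∈ zA, i ∉ z₁.filter (fun i => x i = 1) := by
    intro i hi hiD
    rw [Finset.mem_filter] at hiD
    exact trip_disj hM hiD.1 hi hiD.2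
  obtain ⟨E₁, hE₁, hE₁sub, hE₁trans, hE₁rob⟩ := witness_classify hne hdim hstar
    (z₁.filter (fun i => x i = 1)) ⟨zA, hzAm, subset_suppF_sdiff.2 ⟨hzAs, hzAD⟩⟩
  have hE₁s : ∀ i ∈ E₁, 0 < x i := (subset_suppF_sdiff.1 hE₁sub).1
  have hE₁D : ∀ a, a ∈ z₁ → x a = 1 → a ∉ E₁ := fun a h1 h2 ha =>
    (subset_suppF_sdiff.1 hE₁sub).2 a ha (Finset.mem_filter.2 ⟨h1, h2⟩)
  rcases hgap E₁ hE₁ hE₁s with hfrag | hrob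
  · -- E₁ fragile: its z₁-representative contradicts hE₁D
    obtain ⟨d₁, dA, dB, hEeq, hEone, hd₁z, -, -, -, -, -⟩ :=
      fragile_struct hne hdim hE₁ hfrag hM
    have hd₁E : d₁ ∈ E₁ := by rw [hEeq]; simp
    exact hE₁D d₁ hd₁z (hEone d₁ hd₁E) hd₁E
  · obtain ⟨p, q, hQ, hpE, hqE, ⟨dp, hdpD, hdpp⟩, ⟨dq, hdqD, hdqq⟩⟩ := hE₁rob hrob
    rw [Finset.mem_filter] at hdpD hdqD
    have hh₁E : h₁ ∉ E₁ := hE₁D h₁ hh₁z (hone h₁ hh₁Hs)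
    -- a fully oriented run of stage 2
    have run : ∀ (p' q' : Finset V) (dq' : V), IsPack 𝓗 x {E₁, p', q'} →
        h₁ ∈ p' → dq' ∈ q' → dq' ∈ z₁ → x dq' = 1 → False := by
      intro p' q' dq' hQ' hh₁p hdqq' hdqz' hdqx'
      obtain ⟨c₁, c₂, c₃, hHeq', -, hc₁E, hc₂p, hc₃q, hHuE, hHuP, hHuQ⟩ :=
        fragile_struct hne hdim hHs hHsfrag hQ'
      have hc₁Hs : c₁ ∈ Hs := by rw [hHeq']; simp
      have hc₃Hs : c₃ ∈ Hs := by rw [hHeq']; simp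
      rcases hHsmem c₁ hc₁Hs with hc | hc | hc
      · -- c₁ = h₁ ∈ E₁, contradiction
        exact hh₁E (by rw [← hc]; exact hc₁E)
      · -- c₁ = hA ∈ E₁: swap roles of A and B
        have hBc₃ : hB = c₃ := by
          rcases hHsmem c₃ hc₃Hs with hc' | hc' | hc'
          · exact ((trip_disj₂₃ hQ' (a := c₃) (by rw [hc']; exact hh₁p) hc₃q
              (hone c₃ hc₃Hs)).elim)
          · exfalso
            have h3 : c₃ = c₁ := by rw [hc', ← hc]
            exact trip_disj₁₃ hQ' (a := c₃) (h3 ▸ hc₁E) hc₃q (hone c₃ hc₃Hs)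
          · exact hc'.symm
        exact stage2 hne hdim hstar hgap (trip_swap₂₃ hM) hQ' htrans hHs hHsfrag
          (fun y hy => by
            rcases hHsmem y hy with h | h | h
            exacts [Or.inl h, Or.inr (Or.inr h), Or.inr (Or.inl h)])
          hone hh₁Hs hhBHs hhAHs hh₁z hhBz hhAz hh₁p (by rw [hBc₃]; exact hc₃q)
          (by rw [← hc]; exact hc₁E) hE₁D hdqq' hdqz' hdqx'
      · -- c₁ = hB ∈ E₁: direct
        have hAc₃ : hA = c₃ := by
          rcases hHsmem c₃ hc₃Hs with hc' | hc' | hc'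
          · exact ((trip_disj₂₃ hQ' (a := c₃) (by rw [hc']; exact hh₁p) hc₃q
              (hone c₃ hc₃Hs)).elim)
          · exact hc'.symm
          · exfalso
            have h3 : c₃ = c₁ := by rw [hc', ← hc]
            exact trip_disj₁₃ hQ' (a := c₃) (h3 ▸ hc₁E) hc₃q (hone c₃ hc₃Hs)
        exact stage2 hne hdim hstar hgap hM hQ' htrans hHs hHsfrag hHsmem
          hone hh₁Hs hhAHs hhBHs hh₁z hhAz hhBz hh₁p (by rw [hAc₃]; exact hc₃q)
          (by rw [← hc]; exact hc₁E) hE₁D hdqq' hdqz' hdqx'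
    -- orient h₁ into p or q
    obtain ⟨c₁, c₂, c₃, hHeq', -, hc₁E, hc₂p, hc₃q, hHuE, hHuP, hHuQ⟩ :=
      fragile_struct hne hdim hHs hHsfrag hQ
    have hh₁mem : h₁ ∈ ({c₁, c₂, c₃} : Finset V) := by rw [← hHeq']; exact hh₁Hs
    simp only [Finset.mem_insert, Finset.mem_singleton] at hh₁mem
    rcases hh₁mem with hc | hc | hc
    · exact hh₁E (by rw [hc]; exact hc₁E)
    · exact run p q dq hQ (by rw [hc]; exact hc₂p) hdqq hdqD.1 hdqD.2
    · exact run q p dp (trip_swap₂₃ hQ) (by rw [hc]; exact hc₃q) hdpp hdpD.1 hdpD.2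

omit hdim in
lemma sum_map_ones {z : Multiset (Finset V)} {f : Finset V → ℕ}
    (h : ∀ e ∈ z, f e = 1) : (z.map f).sum = z.card := by
  induction z using Multiset.induction_on with
  | empty => simp
  | cons e z ih =>
    simp only [Multiset.map_cons, Multiset.sum_cons, Multiset.card_cons]
    rw [h e (by simp), ih (fun e' he' => h e' (Multiset.mem_cons_of_mem he'))]
    omega

omit hdim in
lemma card_le_sum_map {z : Multiset (Finset V)} {f : Finset V → ℕ}
    (h : ∀ e ∈ z, 1 ≤ f e) : z.card ≤ (z.map f).sum := by
  induction z using Multiset.induction_on with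
  | empty => simp
  | cons e z ih =>
    simp only [Multiset.map_cons, Multiset.sum_cons, Multiset.card_cons]
    have := h e (by simp)
    have := ih (fun e' he' => h e' (Multiset.mem_cons_of_mem he'))
    omega

/-- The key lemma: under condition (*), every value below the Tetris value is
realized by some move. -/
theorem key_lemma (hstar : CondStar 𝓗) (x : V → ℕ) (k : ℕ) (hk : k < nimT 𝓗 x) :
    ∃ y, nimMove 𝓗 x y ∧ nimT 𝓗 y = k := by
  by_contra hc
  push_neg at hc
  -- no edge's move interval contains k
  have hgapk : ∀ e, e ∈ 𝓗 → (∀ i ∈ e, 0 < x i) →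
      ¬(nimT 𝓗 (xzero x e) ≤ k ∧ k ≤ nimT 𝓗 (xdec x e)) := by
    rintro e he hes ⟨h1, h2⟩
    obtain ⟨y'', hmv, hval⟩ := nimT_ivt hne he (∑ i, xdec x e i) (xzero x e) (xdec x e) rfl
      (fun i hi => by simpa [xzero, hi] using hes i hi)
      (fun i hi => by simp [xzero, hi])
      (fun i hi => by simp only [xdec, if_pos hi]; have := hes i hi; omega)
      (fun i hi => by simp [xdec, hi])
      (xzero_le_xdec x e) k h1 h2
    exact hc y'' hmv hval
  have hT1 : nimT 𝓗 x ≠ 0 := by omega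
  obtain ⟨e₀, he₀, he₀s⟩ := (nimT_ne_zero_iff hne).1 hT1
  -- the witness for the full support
  obtain ⟨Hst, hHstm, hHstsub, hHsttrans⟩ := hstar (suppF x)
    ⟨e₀, he₀, fun i hi => mem_suppF.2 (he₀s i hi)⟩
  have hHsts : ∀ i ∈ Hst, 0 < x i := fun i hi => mem_suppF.1 (hHstsub hi)
  have htrans : ∀ e ∈ 𝓗, (∀ i ∈ e, 0 < x i) → (Hst ∩ e).Nonempty :=
    fun e he hes => hHsttrans e he (fun i hi => mem_suppF.2 (hes i hi))
  -- zeroing the witness kills all the moves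
  have hlo : nimT 𝓗 (xzero x Hst) = 0 := by
    rw [nimT_eq_zero_iff hne]
    rintro ⟨y, H, hH, hlt, -⟩
    have hHs : ∀ i ∈ H, 0 < xzero x Hst i :=
      fun i hi => lt_of_le_of_lt (Nat.zero_le _) (hlt i hi)
    have hHsub : ∀ i ∈ H, 0 < x i := by
      intro i hi
      have := hHs i hi
      by_cases h : i ∈ Hst
      · simp [xzero, h] at this
      · simpa [xzero, h] using this
    obtain ⟨a, ha⟩ := htrans H hH hHsub
    rw [Finset.mem_inter] at ha
    have := hHs a ha.2
    simp [xzero, ha.1] at this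
  have hkhi : nimT 𝓗 (xdec x Hst) < k := by
    have h := hgapk Hst hHstm hHsts
    rw [hlo] at h
    push_neg at h
    exact h (Nat.zero_le k)
  have hlip : nimT 𝓗 x ≤ nimT 𝓗 (xdec x Hst) + 3 :=
    le_trans (nimT_xdec_ge hne Hst) (by have := hdim Hst hHstm; omega)
  -- a maximum packing and one of its edges
  obtain ⟨z, hzp, hzc⟩ := pack_exists hne (nimT 𝓗 x) x rfl
  have hzne : z ≠ 0 := by
    intro h; rw [h] at hzc; simp at hzc; omega
  obtain ⟨e, hez⟩ := Multiset.exists_mem_of_ne_zero hzne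
  have hes : ∀ i ∈ e, 0 < x i := pack_edge_supp hne hzp hez
  have hem : e ∈ 𝓗 := hzp.1 e hez
  -- the decrement of a packing edge realizes T - 1
  have herase : ∀ e' (he' : e' ∈ z), IsPack 𝓗 (xdec x e') (z.erase e') := by
    intro e' he'
    constructor
    · exact fun a ha => hzp.1 a (Multiset.mem_of_mem_erase ha)
    · intro i
      by_cases hi : i ∈ e'
      · have h1 := usage_erase_of_mem he' i hi
        have h2 := hzp.2 i
        simp only [xdec, if_pos hi]
        omega
      · simp only [xdec, if_neg hi]
        exact le_trans (usage_le_of_le (Multiset.erase_le e' z) i) (hzp.2 i)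
  have hcard_erase : ∀ e' (he' : e' ∈ z), (z.erase e').card + 1 = z.card := by
    intro e' he'
    rw [Multiset.card_erase_of_mem he']
    have : 0 < z.card := Multiset.card_pos.2 (by rintro rfl; simp at he')
    exact Nat.succ_pred_eq_of_pos this
  have hhie : nimT 𝓗 (xdec x e) + 1 = nimT 𝓗 x := by
    have h1 : nimT 𝓗 (xdec x e) < nimT 𝓗 x := nimT_lt hne (move_xdec hem hes)
    have h2 := pack_card_le hne (z.erase e).card (xdec x e) _ rfl (herase e hez)
    have h3 := hcard_erase e hez
    omega
  have hlohi : ∀ e' ∈ 𝓗, nimT 𝓗 (xzero x e') ≤ nimT 𝓗 (xdec x e') :=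
    fun e' _ => nimT_mono hne (xzero_le_xdec x e')
  have hloe : k < nimT 𝓗 (xzero x e) := by
    have h := hgapk e hem hes
    push_neg at h
    by_contra hcon
    push_neg at hcon
    have := h hcon
    omega
  -- k + 2 = T
  have hkT : k + 2 = nimT 𝓗 x := by
    have := hlohi e hem
    omega
  -- the interval of the witness is degenerate: T (xdec Hst) + 3 = T
  have hHstdim : Hst.card ≤ 3 := hdim Hst hHstm
  -- C1 : every packing edge meets the witness exactly once
  have hC1 : ∀ e' ∈ z, (Hst ∩ e').card = 1 := by
    intro e' he'
    have hmeet : (Hst ∩ e').Nonempty := htrans e' (hzp.1 e' he') (pack_edge_supp hne hzp he')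
    rcases Nat.lt_or_ge (Hst ∩ e').card 2 with h | h
    · have := Finset.card_pos.2 hmeet
      omega
    · exfalso
      -- delete e' and at most one more edge to get a packing of xdec x Hst
      obtain ⟨z', -, hcard, hpack⟩ := pack_reduce hne (Hst \ e') (z.erase e')
        (fun a ha => hzp.1 a (Multiset.mem_of_mem_erase ha)) (xdec x Hst) (fun i => by
          by_cases hiH : i ∈ Hst
          · by_cases hie : i ∈ e'
            · have h1 := usage_erase_of_mem he' i hie
              have h2 := hzp.2 i
              have h3 : i ∉ Hst \ e' := fun hmem => (Finset.mem_sdiff.1 hmem).2 hie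
              simp only [xdec, if_pos hiH, if_neg h3]
              omega
            · have h1 := usage_le_of_le (Multiset.erase_le e' z) i
              have h2 := hzp.2 i
              have h3 : i ∈ Hst \ e' := Finset.mem_sdiff.2 ⟨hiH, hie⟩
              have h4 := hHsts i hiH
              simp only [xdec, if_pos hiH, if_pos h3]
              omega
          · have h1 := usage_le_of_le (Multiset.erase_le e' z) i
            have h2 := hzp.2 i
            simp only [xdec, if_neg hiH]
            omega)
      have h5 := pack_card_le hne z'.card (xdec x Hst) z' rfl hpack
      have h6 : (Hst \ e').card + (Hst ∩ e').card = Hst.card := by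
        rw [Finset.card_sdiff_add_card_inter]
      have h7 := hcard_erase e' he'
      omega
  -- C2 : the witness coordinates are saturated
  have hC2 : ∀ h ∈ Hst, x h ≤ usage z h := by
    intro h hh
    by_contra hcon
    push_neg at hcon
    obtain ⟨z', -, hcard, hpack⟩ := pack_reduce hne (Hst.erase h) z hzp.1 (xdec x Hst)
      (fun i => by
        by_cases hiH : i ∈ Hst
        · by_cases hih : i = h
          · subst hih
            have h3 : i ∉ Hst.erase i := fun hmem => (Finset.mem_erase.1 hmem).1 rfl
            simp only [xdec, if_pos hiH, if_neg h3]
            omega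
          · have h2 := hzp.2 i
            have h3 : i ∈ Hst.erase h := Finset.mem_erase.2 ⟨hih, hiH⟩
            have h4 := hHsts i hiH
            simp only [xdec, if_pos hiH, if_pos h3]
            omega
        · have h2 := hzp.2 i
          simp only [xdec, if_neg hiH]
          omega)
    have h5 := pack_card_le hne z'.card (xdec x Hst) z' rfl hpack
    have h6 : (Hst.erase h).card + 1 = Hst.card := by
      rw [Finset.card_erase_of_mem hh]
      have : 0 < Hst.card := Finset.card_pos.2 ⟨h, hh⟩
      omega
    omega
  -- counting : T = ∑_{h ∈ Hst} x h
  have hsum : nimT 𝓗 x = ∑ h ∈ Hst, x h := by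
    have h1 : z.card = (z.map (fun e' => (Hst ∩ e').card)).sum :=
      (sum_map_ones hne (fun e' he' => hC1 e' he')).symm
    have h2 := sum_usage hne Hst z
    have h3 : ∑ h ∈ Hst, usage z h = ∑ h ∈ Hst, x h :=
      Finset.sum_congr rfl (fun h hh => le_antisymm (hzp.2 h) (hC2 h hh))
    rw [← hzc, h1, ← h2, h3]
  -- each witness coordinate has value 1
  have hone : ∀ h ∈ Hst, x h = 1 := by
    intro h hh
    -- find a packing edge through h
    have husage : 0 < usage z h := lt_of_lt_of_le (hHsts h hh) (hC2 h hh)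
    obtain ⟨eh, hehz, hheh⟩ := usage_pos_iff.1 husage
    have hehm : eh ∈ 𝓗 := hzp.1 eh hehz
    have hehs : ∀ i ∈ eh, 0 < x i := pack_edge_supp hne hzp hehz
    -- eh meets Hst only in h
    have hHeh : ∀ a ∈ Hst, a ∈ eh → a = h := by
      intro a ha hae
      have h1 := hC1 eh hehz
      have h2 : a ∈ Hst ∩ eh := Finset.mem_inter.2 ⟨ha, hae⟩
      have h3 : h ∈ Hst ∩ eh := Finset.mem_inter.2 ⟨hh, hheh⟩
      rw [Finset.card_eq_one] at h1
      obtain ⟨b, hb⟩ := h1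
      rw [hb, Finset.mem_singleton] at h2 h3
      rw [h2, h3]
    -- eh realizes T - 1, so by the gap its zero value is ≥ k + 1 = T - 1
    have hhieh : nimT 𝓗 (xdec x eh) + 1 = nimT 𝓗 x := by
      have h1 : nimT 𝓗 (xdec x eh) < nimT 𝓗 x := nimT_lt hne (move_xdec hehm hehs)
      have h2 := pack_card_le hne (z.erase eh).card (xdec x eh) _ rfl (herase eh hehz)
      have h3 := hcard_erase eh hehz
      omega
    have hloeh : k < nimT 𝓗 (xzero x eh) := by
      have h := hgapk eh hehm hehs
      push_neg at h
      by_contra hcon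
      push_neg at hcon
      have := h hcon
      omega
    -- a maximum packing of the zeroed position counts into Hst.erase h
    obtain ⟨w, hwp, hwc⟩ := pack_exists hne (nimT 𝓗 (xzero x eh)) (xzero x eh) rfl
    have hwcount : w.card ≤ ∑ a ∈ Hst.erase h, usage w a := by
      rw [sum_usage hne]
      apply card_le_sum_map hne
      intro e'' he''
      have he''m : e'' ∈ 𝓗 := hwp.1 e'' he''
      have he''supp : ∀ i ∈ e'', 0 < xzero x eh i := pack_edge_supp hne hwp he''
      have he''s : ∀ i ∈ e'', 0 < x i := by
        intro i hi
        have := he''supp i hi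
        by_cases hie : i ∈ eh
        · simp [xzero, hie] at this
        · simpa [xzero, hie] using this
      obtain ⟨a, ha⟩ := htrans e'' he''m he''s
      rw [Finset.mem_inter] at ha
      have hane : a ≠ h := by
        intro hah
        have := he''supp a ha.2
        rw [hah] at this
        simp [xzero, hheh] at this
      have : a ∈ (Hst.erase h) ∩ e'' :=
        Finset.mem_inter.2 ⟨Finset.mem_erase.2 ⟨hane, ha.1⟩, ha.2⟩
      have := Finset.card_pos.2 ⟨a, this⟩
      omega
    have husage_le : ∀ a ∈ Hst.erase h, usage w a ≤ x a := by
      intro a ha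
      rw [Finset.mem_erase] at ha
      have h1 := hwp.2 a
      have h2 : a ∉ eh := fun hae => ha.1 (hHeh a ha.2 hae)
      simpa [xzero, h2] using h1
    have hsum2 : ∑ a ∈ Hst.erase h, usage w a ≤ ∑ a ∈ Hst.erase h, x a :=
      Finset.sum_le_sum husage_le
    have hsum3 : x h + ∑ a ∈ Hst.erase h, x a = ∑ a ∈ Hst, x a :=
      Finset.add_sum_erase Hst x hh
    have := hHsts h hh
    omega
  -- conclude T = 3 and invoke the endgame
  have hT3 : nimT 𝓗 x = 3 := by
    have h1 : ∑ h ∈ Hst, x h = Hst.card := by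
      rw [Finset.card_eq_sum_ones]
      exact Finset.sum_congr rfl hone
    have h2 : 0 < Hst.card := Finset.card_pos.2 (hne Hst hHstm)
    omega
  have hgap3 : ∀ e', e' ∈ 𝓗 → (∀ i ∈ e', 0 < x i) →
      nimT 𝓗 (xdec x e') = 0 ∨ 2 ≤ nimT 𝓗 (xzero x e') := by
    intro e' he' he's
    have h := hgapk e' he' he's
    push_neg at h
    have hk1 : k = 1 := by omega
    rcases Nat.eq_zero_or_pos (nimT 𝓗 (xdec x e')) with h0 | hpos
    · exact Or.inl h0
    · right
      by_contra hcon
      push_neg at hcon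
      have := h (by omega)
      omega
  exact endgame hne hdim hstar hT3 hgap3

end Key

/-! ### Main theorem -/

section Main

variable {V : Type*} [Fintype V] [DecidableEq V] {𝓗 : Set (Finset V)}

theorem sg_eq_nimT (hne : ∀ H ∈ 𝓗, H.Nonempty) (hdim : ∀ H ∈ 𝓗, H.card ≤ 3)
    (hstar : CondStar 𝓗) (x : V → ℕ) : sgFun (nimMove 𝓗) x = nimT 𝓗 x := by
  have hwf := nimMove_wf hne
  induction x using hwf.induction with
  | _ x ih =>
    rw [sgFun_eq hwf]
    have hset : {v | ∃ y, nimMove 𝓗 x y ∧ sgFun (nimMove 𝓗) y = v}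
        = Set.Iio (nimT 𝓗 x) := by
      ext v
      constructor
      · rintro ⟨y, hy, rfl⟩
        rw [ih y hy]
        exact nimT_lt hne hy
      · intro hv
        obtain ⟨y, hy, hvy⟩ := key_lemma hne hdim hstar x v hv
        exact ⟨y, hy, by rw [ih y hy, hvy]⟩
    rw [hset, mex_Iio]

theorem tetris_of_condStar (hne : ∀ H ∈ 𝓗, H.Nonempty) (hdim : ∀ H ∈ 𝓗, H.card ≤ 3)
    (hstar : CondStar 𝓗) : IsTetrisHypergraph 𝓗 := by
  intro x y hmove
  rw [sg_eq_nimT hne hdim hstar, sg_eq_nimT hne hdim hstar]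
  exact nimT_lt hne hmove

theorem condStar_of_tetris (hne : ∀ H ∈ 𝓗, H.Nonempty)
    (htet : IsTetrisHypergraph 𝓗) : CondStar 𝓗 := by
  have hwf := nimMove_wf hne
  rintro S ⟨H₀, hH₀, hH₀S⟩
  by_contra hcon
  push_neg at hcon
  set x : V → ℕ := fun i => if i ∈ S then 1 else 0 with hxdef
  have hterm_sg : ∀ y : V → ℕ, (∃ w, nimMove 𝓗 y w) →
      1 ≤ sgFun (nimMove 𝓗) y := by
    rintro y ⟨w, hw⟩
    have := htet y w hw
    omega
  have hmv : ∀ y, nimMove 𝓗 x y → ∃ w, nimMove 𝓗 y w := by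
    rintro y ⟨H, hH, hlt, heq⟩
    have hHS : H ⊆ S := by
      intro i hi
      have h1 := hlt i hi
      by_contra h
      simp only [hxdef, if_neg h] at h1
      omega
    obtain ⟨H', hH', hH'S, hdisj⟩ := hcon H hH hHS
    refine ⟨xzero y H', H', hH', fun i hi => ?_, fun i hi => by simp [xzero, hi]⟩
    have hiH : i ∉ H := fun h => (Finset.not_nonempty_iff_eq_empty.2 hdisj) ⟨i, Finset.mem_inter.2 ⟨h, hi⟩⟩
    rw [heq i hiH]
    simp only [xzero, if_pos hi, hxdef, if_pos (hH'S hi)]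
    omega
  have h0 : sgFun (nimMove 𝓗) x = 0 := by
    rw [sgFun_eq hwf]
    apply mex_eq_zero
    rintro ⟨y, hy, hy0⟩
    have := hterm_sg y (hmv y hy)
    omega
  have h1 : 1 ≤ sgFun (nimMove 𝓗) x := by
    apply hterm_sg
    refine ⟨xzero x H₀, move_xzero hH₀ fun i hi => ?_⟩
    simp [hxdef, hH₀S hi]
  omega

end Main

theorem stmt4 {V : Type*} [Fintype V] [DecidableEq V]
    (𝓗 : Set (Finset V)) (hne : ∀ H ∈ 𝓗, H.Nonempty)
    (hdim : ∀ H ∈ 𝓗, H.card ≤ 3) :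
    IsTetrisHypergraph 𝓗 ↔ CondStar 𝓗 :=
  ⟨condStar_of_tetris hne, tetris_of_condStar hne hdim⟩
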